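/- For the complete graph K_n with n ≥ 2, the middle 3-rainbow domination number is γ*_{r3}(K_n) = 3n/2 if n is even and (3n−1)/2 if n is odd. -/

import Mathlib

open SimpleGraph Finset

/-- A `k`-rainbow dominating function on a graph `H`. -/
def IsRDF {W : Type*} (H : SimpleGraph W) (k : ℕ) (f : W → Finset (Fin k)) : Prop :=
  ∀ w, f w = ∅ → ∀ c : Fin k, ∃ u, H.Adj w u ∧ c ∈ f u

/-- The weight of a rainbow dominating function. -/
noncomputable def rdfWeight {W : Type*} [Fintype W] {k : ℕ} (f : W → Finset (Fin k)) : ℕ :=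
  ∑ w, (f w).card

/-- The `k`-rainbow domination number of a graph. -/
noncomputable def rdn {W : Type*} [Fintype W] (H : SimpleGraph W) (k : ℕ) : ℕ :=
  sInf {n | ∃ f : W → Finset (Fin k), IsRDF H k f ∧ rdfWeight f = n}

/-- The middle graph of `G`, on vertex set `V(G) ⊕ E(G)`. -/
def middleGraph {V : Type*} (G : SimpleGraph V) : SimpleGraph (V ⊕ G.edgeSet) where
  Adj x y :=
    match x, y with
    | Sum.inl _, Sum.inl _ => False
    | Sum.inl v, Sum.inr e => v ∈ (e : Sym2 V)
    | Sum.inr e, Sum.inl v => v ∈ (e : Sym2 V)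
    | Sum.inr e, Sum.inr f => e ≠ f ∧ ∃ v, v ∈ (e : Sym2 V) ∧ v ∈ (f : Sym2 V)
  symm := by
    constructor
    rintro (v | e) (w | f) h
    · exact h.elim
    · exact h
    · exact h
    · exact ⟨Ne.symm h.1, h.2.imp fun v hv => ⟨hv.2, hv.1⟩⟩
  loopless := by
    constructor
    rintro (v | e) h
    · exact h.elim
    · exact h.1 rfl

/-- The middle `k`-rainbow domination number `γ*_{rk}(G)`. -/
noncomputable def mrdn {V : Type*} [Fintype V] (G : SimpleGraph V) (k : ℕ) : ℕ :=
  letI := Classical.decEq V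
  letI : DecidableRel G.Adj := fun _ _ => Classical.dec _
  rdn (middleGraph G) k

/-- The `k`-rainbow domatic number: the maximum size of a family of `k`-rainbow
dominating functions with `∑ i |f i v| ≤ k` for each vertex `v`. -/
noncomputable def rdomatic {W : Type*} (H : SimpleGraph W) (k : ℕ) : ℕ :=
  sSup {d | ∃ F : Fin d → W → Finset (Fin k), Function.Injective F ∧
    (∀ i, IsRDF H k (F i)) ∧ ∀ w, (∑ i, (F i w).card) ≤ k}

/-- The matching number `α'(G)`. -/
noncomputable def matchingNumber {V : Type*} [Fintype V] (G : SimpleGraph V) : ℕ :=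
  sSup {n | ∃ M : Finset (Sym2 V), ↑M ⊆ G.edgeSet ∧
    (∀ e ∈ M, ∀ f ∈ M, e ≠ f → ∀ v : V, ¬(v ∈ e ∧ v ∈ f)) ∧ M.card = n}


/-- the matched edge joining 2k and 2k+1 -/
def medge (n : ℕ) (k : ℕ) (h2 : 2*k+1 < n) : ((⊤ : SimpleGraph (Fin n)).edgeSet) :=
  ⟨s(⟨2*k, by omega⟩, ⟨2*k+1, by omega⟩), by
    rw [SimpleGraph.mem_edgeSet, SimpleGraph.top_adj]
    simp [Fin.ext_iff]⟩

def Mset (n : ℕ) : Finset ((⊤ : SimpleGraph (Fin n)).edgeSet) :=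
  (Finset.range (n/2)).attach.image
    (fun k => medge n k.1 (by have := Finset.mem_range.mp k.2; omega))

lemma medge_inj (n : ℕ) (k k' : ℕ) (h : 2*k+1 < n) (h' : 2*k'+1 < n)
    (he : medge n k h = medge n k' h') : k = k' := by
  have := Subtype.ext_iff.mp he
  simp only [medge] at this
  rw [Sym2.eq_iff] at this
  rcases this with ⟨h1, _⟩ | ⟨h1, h2⟩ <;> simp [Fin.ext_iff] at * <;> omega

lemma Mset_card (n : ℕ) : (Mset n).card = n / 2 := by
  rw [Mset, Finset.card_image_of_injective, Finset.card_attach, Finset.card_range]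
  intro a b hab
  have := medge_inj n a.1 b.1 _ _ hab
  exact Subtype.ext this

lemma mem_Mset (n : ℕ) (e : ((⊤ : SimpleGraph (Fin n)).edgeSet)) :
    e ∈ Mset n ↔ ∃ k, ∃ h : 2*k+1 < n, e = medge n k h := by
  simp only [Mset, Finset.mem_image, Finset.mem_attach, true_and, Subtype.exists,
    Finset.mem_range]
  constructor
  · rintro ⟨k, hk, rfl⟩; exact ⟨k, by omega, rfl⟩
  · rintro ⟨k, hk, rfl⟩; exact ⟨k, by omega, rfl⟩

/-- upper bound construction -/
def upF (n : ℕ) : (Fin n ⊕ ((⊤ : SimpleGraph (Fin n)).edgeSet)) → Finset (Fin 3) :=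
  fun x => match x with
  | Sum.inl v => if n % 2 = 1 ∧ v.val = n - 1 then {0} else ∅
  | Sum.inr e => if e ∈ Mset n then Finset.univ else ∅

/-- every vertex except the possible leftover lies in a matched edge -/
lemma exists_medge (n : ℕ) (x : Fin n) (hx : ¬ (n % 2 = 1 ∧ x.val = n - 1)) :
    ∃ e ∈ Mset n, x ∈ (e : Sym2 (Fin n)) := by
  have hxn := x.2
  have hx' : n % 2 = 0 ∨ x.val ≠ n - 1 := by
    rcases Nat.even_or_odd n with h | h
    · exact Or.inl (Nat.even_iff.mp h)
    · right; intro hc; exact hx ⟨Nat.odd_iff.mp h, hc⟩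
  have hk : 2 * (x.val / 2) + 1 < n := by rcases hx' with h | h <;> omega
  have hmm : medge n (x.val / 2) hk ∈ Mset n := (mem_Mset n _).mpr ⟨x.val / 2, hk, rfl⟩
  refine ⟨medge n (x.val / 2) hk, hmm, ?_⟩
  rw [medge]
  simp only [Sym2.mem_iff]
  rcases Nat.even_or_odd x.val with h | h
  · left; rw [Nat.even_iff] at h; exact Fin.ext (by simp; omega)
  · right; exact Fin.ext (by simp; rw [Nat.odd_iff] at h; omega)

lemma upF_isRDF (n : ℕ) (hn : 2 ≤ n) : IsRDF (middleGraph (⊤ : SimpleGraph (Fin n))) 3 (upF n) := by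
  intro w hw c
  match w with
  | Sum.inl v =>
    have hv : ¬ (n % 2 = 1 ∧ v.val = n - 1) := by
      intro h; rw [upF] at hw; simp [h] at hw
    obtain ⟨e, heM, hve⟩ := exists_medge n v hv
    exact ⟨Sum.inr e, hve, by rw [upF]; simp [heM]⟩
  | Sum.inr e =>
    have heM : e ∉ Mset n := by
      intro h; rw [upF] at hw; simp [h] at hw
      exact Finset.univ_nonempty.ne_empty hw
    obtain ⟨e', he'⟩ := e
    induction e' using Sym2.ind with
    | _ a b =>
      have hab : a ≠ b := by
        rw [SimpleGraph.mem_edgeSet, SimpleGraph.top_adj] at he'; exact he'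
      -- pick x ∈ {a,b} with x.val ≠ n-1
      obtain ⟨x, hxmem, hxn⟩ : ∃ x : Fin n, x ∈ s(a,b) ∧ x.val ≠ n - 1 := by
        by_cases ha : a.val = n - 1
        · refine ⟨b, by simp, ?_⟩
          intro hb; exact hab (Fin.ext (ha.trans hb.symm))
        · exact ⟨a, by simp, ha⟩
      obtain ⟨f, hfM, hxf⟩ := exists_medge n x (by tauto)
      refine ⟨Sum.inr f, ⟨?_, x, hxmem, hxf⟩, by rw [upF]; simp [hfM]⟩
      intro hef; rw [← hef] at hfM; exact heM hfM

lemma upF_weight (n : ℕ) (hn : 2 ≤ n) : rdfWeight (upF n) = 3 * n / 2 := by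
  classical
  rw [rdfWeight, Fintype.sum_sum_type]
  have h2 : ∑ e : ((⊤ : SimpleGraph (Fin n)).edgeSet), (upF n (Sum.inr e)).card
      = 3 * (n / 2) := by
    have : ∀ e : ((⊤ : SimpleGraph (Fin n)).edgeSet), (upF n (Sum.inr e)).card
        = if e ∈ Mset n then 3 else 0 := by
      intro e; rw [upF]; split <;> simp
    simp_rw [this]
    rw [Finset.sum_ite_mem, Finset.univ_inter, Finset.sum_const, Mset_card, smul_eq_mul]
    ring
  have h1 : ∑ v : Fin n, (upF n (Sum.inl v)).card = n % 2 := by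
    by_cases hp : n % 2 = 1
    · have hv0 : (n:ℕ) - 1 < n := by omega
      have : ∀ v : Fin n, (upF n (Sum.inl v)).card
          = if v = (⟨n-1, hv0⟩ : Fin n) then 1 else 0 := by
        intro v; rw [upF]; simp only [hp, true_and]
        have : (v.val = n - 1) ↔ (v = (⟨n-1, hv0⟩ : Fin n)) := by
          rw [Fin.ext_iff]
        split <;> split <;> simp_all
      simp_rw [this]
      rw [Finset.sum_ite_eq' Finset.univ, if_pos (Finset.mem_univ _), hp]
    · have hp0 : n % 2 = 0 := by omega
      have : ∀ v : Fin n, (upF n (Sum.inl v)).card = 0 := by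
        intro v; rw [upF]; simp [hp0]
      simp [this, hp0]
  rw [h1, h2]; omega

section Lower
variable (n : ℕ) (f : (Fin n ⊕ ((⊤ : SimpleGraph (Fin n)).edgeSet)) → Finset (Fin 3))

/-- sum of edge-label cards over edges at `v` -/
def Sv (v : Fin n) : ℕ :=
  ∑ e : ((⊤ : SimpleGraph (Fin n)).edgeSet),
    if v ∈ (e : Sym2 (Fin n)) then (f (Sum.inr e)).card else 0

lemma two_endpoints (e : ((⊤ : SimpleGraph (Fin n)).edgeSet)) :
    (Finset.univ.filter (fun v : Fin n => v ∈ (e : Sym2 (Fin n)))).card = 2 := by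
  obtain ⟨e, he⟩ := e
  induction e using Sym2.ind with
  | _ a b =>
    rw [SimpleGraph.mem_edgeSet, SimpleGraph.top_adj] at he
    have h : Finset.univ.filter (fun v : Fin n => v ∈ s(a,b)) = {a, b} := by
      ext v; simp [Sym2.mem_iff]
    rw [h, Finset.card_insert_of_notMem (by simp [he]), Finset.card_singleton]

lemma sum_Sv : ∑ v : Fin n, Sv n f v
    = 2 * ∑ e : ((⊤ : SimpleGraph (Fin n)).edgeSet), (f (Sum.inr e)).card := by
  rw [Finset.mul_sum]
  unfold Sv
  rw [Finset.sum_comm]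
  refine Finset.sum_congr rfl fun e _ => ?_
  rw [← Finset.sum_filter, Finset.sum_const, two_endpoints, smul_eq_mul]

lemma S_zero (v : Fin n) (h : Sv n f v = 0) :
    ∀ e : ((⊤ : SimpleGraph (Fin n)).edgeSet), v ∈ (e : Sym2 (Fin n)) → f (Sum.inr e) = ∅ := by
  intro e he
  have h2 := Finset.sum_eq_zero_iff.mp h e (Finset.mem_univ e)
  rw [if_pos he] at h2
  exact Finset.card_eq_zero.mp h2

lemma vertex_bound (hf : IsRDF (middleGraph (⊤ : SimpleGraph (Fin n))) 3 f) (v : Fin n) :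
    ((f (Sum.inl v)).card = 1 ∧ Sv n f v = 0) ∨
      3 ≤ 2 * (f (Sum.inl v)).card + Sv n f v := by
  by_cases h0 : f (Sum.inl v) = ∅
  · right
    have hsub : (Finset.univ : Finset (Fin 3)) ⊆
        (Finset.univ.filter (fun e : ((⊤ : SimpleGraph (Fin n)).edgeSet) =>
          v ∈ (e : Sym2 (Fin n)))).biUnion (fun e => f (Sum.inr e)) := by
      intro c _
      obtain ⟨u, hadj, hc⟩ := hf _ h0 c
      match u with
      | Sum.inl w => exact False.elim hadj
      | Sum.inr e =>
        exact Finset.mem_biUnion.mpr ⟨e, Finset.mem_filter.mpr ⟨Finset.mem_univ _, hadj⟩, hc⟩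
    have h3 : 3 ≤ Sv n f v := by
      have hA := Finset.card_le_card hsub
      have hB := Finset.card_biUnion_le
        (s := Finset.univ.filter (fun e : ((⊤ : SimpleGraph (Fin n)).edgeSet) =>
          v ∈ (e : Sym2 (Fin n)))) (t := fun e => f (Sum.inr e))
      have hC : ∑ e ∈ Finset.univ.filter (fun e : ((⊤ : SimpleGraph (Fin n)).edgeSet) =>
          v ∈ (e : Sym2 (Fin n))), (f (Sum.inr e)).card = Sv n f v := by
        rw [Sv, Finset.sum_filter]
      simp only [Finset.card_univ, Fintype.card_fin] at hA
      omega
    omega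
  · have h1 : 1 ≤ (f (Sum.inl v)).card :=
      Finset.card_pos.mpr (Finset.nonempty_iff_ne_empty.mpr h0)
    by_cases h2 : (f (Sum.inl v)).card = 1
    · by_cases h3 : Sv n f v = 0
      · exact Or.inl ⟨h2, h3⟩
      · right; omega
    · right; omega

lemma not_two_bad (hf : IsRDF (middleGraph (⊤ : SimpleGraph (Fin n))) 3 f)
    (u v : Fin n) (huv : u ≠ v)
    (hu : (f (Sum.inl u)).card = 1 ∧ Sv n f u = 0)
    (hv : (f (Sum.inl v)).card = 1 ∧ Sv n f v = 0) : False := by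
  have he0 : s(u,v) ∈ (⊤ : SimpleGraph (Fin n)).edgeSet := by
    rw [SimpleGraph.mem_edgeSet, SimpleGraph.top_adj]; exact huv
  have hfe0 : f (Sum.inr ⟨s(u,v), he0⟩) = ∅ :=
    S_zero n f u hu.2 ⟨s(u,v), he0⟩ (by simp)
  have hcol : ∀ c : Fin 3, c ∈ f (Sum.inl u) ∪ f (Sum.inl v) := by
    intro c
    obtain ⟨w, hadj, hc⟩ := hf _ hfe0 c
    match w with
    | Sum.inl x =>
      have hx : x ∈ s(u,v) := hadj
      rw [Sym2.mem_iff] at hx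
      rcases hx with rfl | rfl
      · exact Finset.mem_union_left _ hc
      · exact Finset.mem_union_right _ hc
    | Sum.inr e' =>
      obtain ⟨hne, w', hw1, hw2⟩ := hadj
      have hw1' : w' ∈ s(u,v) := hw1
      rw [Sym2.mem_iff] at hw1'
      rcases hw1' with rfl | rfl
      · rw [S_zero n f w' hu.2 e' hw2] at hc; exact absurd hc (by simp)
      · rw [S_zero n f w' hv.2 e' hw2] at hc; exact absurd hc (by simp)
  have hsub : (Finset.univ : Finset (Fin 3)) ⊆ f (Sum.inl u) ∪ f (Sum.inl v) :=
    fun c _ => hcol c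
  have h3 : 3 ≤ (f (Sum.inl u) ∪ f (Sum.inl v)).card := by
    have hA := Finset.card_le_card hsub
    simp only [Finset.card_univ, Fintype.card_fin] at hA
    exact hA
  have h4 := Finset.card_union_le (f (Sum.inl u)) (f (Sum.inl v))
  omega

lemma lowerBound (hn : 2 ≤ n)
    (hf : IsRDF (middleGraph (⊤ : SimpleGraph (Fin n))) 3 f) :
    3 * n - 1 ≤ 2 * rdfWeight f := by
  have hW : 2 * rdfWeight f
      = ∑ v : Fin n, (2 * (f (Sum.inl v)).card + Sv n f v) := by
    rw [rdfWeight, Fintype.sum_sum_type, Finset.sum_add_distrib, ← Finset.mul_sum,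
      sum_Sv, Nat.mul_add]
  rw [hW]
  by_cases hbad : ∃ v : Fin n, (f (Sum.inl v)).card = 1 ∧ Sv n f v = 0
  · obtain ⟨v0, hb⟩ := hbad
    have hrest : ∀ v ∈ Finset.univ.erase v0,
        3 ≤ 2 * (f (Sum.inl v)).card + Sv n f v := by
      intro v hv
      have hne : v ≠ v0 := Finset.ne_of_mem_erase hv
      exact (vertex_bound n f hf v).resolve_left (fun h => not_two_bad n f hf v v0 hne h hb)
    have hsplit : (2 * (f (Sum.inl v0)).card + Sv n f v0)
        + ∑ v ∈ Finset.univ.erase v0, (2 * (f (Sum.inl v)).card + Sv n f v)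
        = ∑ v : Fin n, (2 * (f (Sum.inl v)).card + Sv n f v) :=
      Finset.add_sum_erase Finset.univ
        (fun v => 2 * (f (Sum.inl v)).card + Sv n f v) (Finset.mem_univ v0)
    have hbound : (Finset.univ.erase v0).card • 3
        ≤ ∑ v ∈ Finset.univ.erase v0, (2 * (f (Sum.inl v)).card + Sv n f v) :=
      Finset.card_nsmul_le_sum _ _ _ hrest
    rw [Finset.card_erase_of_mem (Finset.mem_univ v0), Finset.card_univ,
      Fintype.card_fin, smul_eq_mul] at hbound
    have hv0 : 2 * (f (Sum.inl v0)).card + Sv n f v0 = 2 := by rw [hb.1, hb.2]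
    omega
  · push_neg at hbad
    have hall : ∀ v ∈ (Finset.univ : Finset (Fin n)),
        3 ≤ 2 * (f (Sum.inl v)).card + Sv n f v := by
      intro v _
      rcases vertex_bound n f hf v with h | h
      · exact absurd h.2 (hbad v h.1)
      · exact h
    have hbound := Finset.card_nsmul_le_sum _ _ _ hall
    rw [Finset.card_univ, Fintype.card_fin, smul_eq_mul] at hbound
    omega

end Lower

lemma rdn_congr {W : Type*} (i1 i2 : Fintype W) (H : SimpleGraph W) (k : ℕ) :
    @rdn W i1 H k = @rdn W i2 H k := by
  cases Subsingleton.elim i1 i2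
  rfl

lemma keyCanon (n : ℕ) (hn : 2 ≤ n) :
    rdn (middleGraph (⊤ : SimpleGraph (Fin n))) 3 = 3 * n / 2 := by
  rw [rdn]
  apply le_antisymm
  · apply Nat.sInf_le
    exact ⟨upF n, upF_isRDF n hn, upF_weight n hn⟩
  · refine le_csInf ⟨3 * n / 2, upF n, upF_isRDF n hn, upF_weight n hn⟩ ?_
    rintro m ⟨f, hf, rfl⟩
    have := lowerBound n f hn hf
    omega

/-- middle 3-rainbow domination number of complete graphs. -/
theorem stmt8 (n : ℕ) (hn : 2 ≤ n) :
    (Even n → mrdn (⊤ : SimpleGraph (Fin n)) 3 = 3 * n / 2) ∧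
    (Odd n → mrdn (⊤ : SimpleGraph (Fin n)) 3 = (3 * n - 1) / 2) := by
  have hkey : mrdn (⊤ : SimpleGraph (Fin n)) 3 = 3 * n / 2 := by
    unfold mrdn
    exact (rdn_congr _ _ _ _).trans (keyCanon n hn)
  constructor
  · intro _; exact hkey
  · intro ho
    obtain ⟨k, hk⟩ := ho
    rw [hkey]
    omega
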